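/- arXiv:2402.03048 — 2 statements merged into one kernel-verified Lean document; each statement's English description precedes it below -/
import Mathlib

section
/- Let n ≥ 1, let K be a real symmetric positive semidefinite n×n matrix, k ∈ ℝⁿ, κ ∈ ℝ, and suppose the bordered (n+1)×(n+1) matrix [[K, k],[kᵀ, κ]] is positive semidefinite. Then for every σ > 0, 0 ≤ κ − kᵀ(K + σ²I)⁻¹k ≤ κ. -/
open Matrix

/-- The Gaussian process posterior variance `κ - kᵀ (K + σ² I)⁻¹ k` is nonnegative and
never exceeds the prior variance `κ`, provided the bordered kernel matrix is PSD. -/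
theorem posterior_variance_bounds (n : ℕ) (hn : 1 ≤ n)
    (K : Matrix (Fin n) (Fin n) ℝ) (hK : K.PosSemidef)
    (k : Fin n → ℝ) (κ : ℝ)
    (hbord : (Matrix.fromBlocks K (Matrix.of fun i (_ : Unit) => k i)
        (Matrix.of fun (_ : Unit) j => k j)
        (Matrix.of fun (_ : Unit) (_ : Unit) => κ)).PosSemidef) :
    ∀ σ : ℝ, 0 < σ →
      0 ≤ κ - k ⬝ᵥ ((K + σ ^ 2 • (1 : Matrix (Fin n) (Fin n) ℝ))⁻¹ *ᵥ k) ∧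
      κ - k ⬝ᵥ ((K + σ ^ 2 • (1 : Matrix (Fin n) (Fin n) ℝ))⁻¹ *ᵥ k) ≤ κ := by
  intro σ hσ
  set A : Matrix (Fin n) (Fin n) ℝ := K + σ ^ 2 • (1 : Matrix (Fin n) (Fin n) ℝ) with hAdef
  have hsm : (σ ^ 2 • (1 : Matrix (Fin n) (Fin n) ℝ)).PosDef := by
    have : σ ^ 2 • (1 : Matrix (Fin n) (Fin n) ℝ)
        = Matrix.diagonal (fun _ => σ ^ 2) := by
      ext i j
      by_cases h : i = j <;> simp [Matrix.one_apply, Matrix.diagonal_apply, h]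
    rw [this, Matrix.posDef_diagonal_iff]
    exact fun _ => pow_pos hσ 2
  have hA : A.PosDef := Matrix.PosDef.posSemidef_add hK hsm
  have hAinv : (A⁻¹).PosDef := hA.inv
  set y : Fin n → ℝ := A⁻¹ *ᵥ k with hy
  have hky : 0 ≤ k ⬝ᵥ y := by
    have := hAinv.posSemidef.dotProduct_mulVec_nonneg k
    simpa using this
  have hAy : A *ᵥ y = k := by
    rw [hy, Matrix.mulVec_mulVec, Matrix.mul_nonsing_inv _ (isUnit_iff_ne_zero.mpr hA.det_pos.ne'),
      Matrix.one_mulVec]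
  -- quadratic form of the bordered matrix at (-y, 1)
  have hq := hbord.dotProduct_mulVec_nonneg (Sum.elim (-y) (fun _ => (1 : ℝ)))
  have hKy : y ⬝ᵥ (K *ᵥ y) = y ⬝ᵥ k - σ ^ 2 * (y ⬝ᵥ y) := by
    have : K = A - σ ^ 2 • (1 : Matrix (Fin n) (Fin n) ℝ) := by
      rw [hAdef]; ring_nf; abel
    rw [this, Matrix.sub_mulVec, dotProduct_sub, hAy, Matrix.smul_mulVec,
      Matrix.one_mulVec, dotProduct_smul, smul_eq_mul]
  have hq' : 0 ≤ κ - k ⬝ᵥ y - σ ^ 2 * (y ⬝ᵥ y) := by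
    have hcomm : y ⬝ᵥ k = k ⬝ᵥ y := dotProduct_comm _ _
    rw [star_trivial, Matrix.fromBlocks_mulVec, sumElim_dotProduct_sumElim] at hq
    simp only [Sum.elim_comp_inl, Sum.elim_comp_inr] at hq
    have h1 : ((Matrix.of fun i (_ : Unit) => k i) *ᵥ fun _ => (1 : ℝ)) = k := by
      ext i; simp [Matrix.mulVec, dotProduct]
    have h2 : (Matrix.of fun (_ : Unit) j => k j) *ᵥ (-y)
        = fun _ => k ⬝ᵥ (-y) := by
      ext u; simp [Matrix.mulVec, dotProduct]
    have h3 : ((Matrix.of fun (_ : Unit) (_ : Unit) => κ) *ᵥ fun _ => (1 : ℝ))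
        = fun _ => κ := by
      ext u; simp [Matrix.mulVec, dotProduct]
    rw [h1, h2, h3] at hq
    simp only [dotProduct_add, Pi.add_apply, dotProduct,
      Matrix.mulVec_neg, neg_dotProduct, dotProduct_neg] at hq
    have hq2 : 0 ≤ y ⬝ᵥ (K *ᵥ y) - y ⬝ᵥ k - k ⬝ᵥ y + κ := by
      simp only [dotProduct, Finset.mul_sum, neg_mul, mul_neg, one_mul,
        Finset.univ_unique, Finset.sum_singleton, Pi.neg_apply, neg_neg,
        Finset.sum_add_distrib, Finset.sum_neg_distrib] at hq ⊢
      simp only [mul_add, mul_neg, Finset.sum_add_distrib, Finset.sum_neg_distrib,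
        mul_comm] at hq ⊢
      linarith
    rw [hKy, hcomm] at hq2
    linarith
  have hyy : 0 ≤ y ⬝ᵥ y := by
    simpa using dotProduct_star_self_nonneg y
  constructor
  · nlinarith [sq_nonneg σ]
  · linarith
end

section
/- Let n ≥ 1, let K be a real symmetric positive semidefinite n×n matrix, k ∈ ℝⁿ, κ > 0, and suppose the bordered (n+1)×(n+1) matrix [[K, k],[kᵀ, κ]] is positive semidefinite. Then for every σ > 0, κ − kᵀ(K + σ²I)⁻¹k > 0. -/
open Matrix

/-- With observation noise `σ > 0` and positive prior variance `κ > 0`, the Gaussian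
process posterior variance `κ - kᵀ (K + σ² I)⁻¹ k` is strictly positive. -/
theorem posterior_variance_pos (n : ℕ) (hn : 1 ≤ n)
    (K : Matrix (Fin n) (Fin n) ℝ) (hK : K.PosSemidef)
    (k : Fin n → ℝ) (κ : ℝ) (hκ : 0 < κ)
    (hbord : (Matrix.fromBlocks K (Matrix.of fun i (_ : Unit) => k i)
        (Matrix.of fun (_ : Unit) j => k j)
        (Matrix.of fun (_ : Unit) (_ : Unit) => κ)).PosSemidef) :
    ∀ σ : ℝ, 0 < σ →
      0 < κ - k ⬝ᵥ ((K + σ ^ 2 • (1 : Matrix (Fin n) (Fin n) ℝ))⁻¹ *ᵥ k) := by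
  intro σ hσ
  set M : Matrix (Fin n) (Fin n) ℝ := K + σ ^ 2 • (1 : Matrix (Fin n) (Fin n) ℝ) with hMdef
  have hσ2 : (0:ℝ) < σ ^ 2 := by positivity
  have hsmul : (σ ^ 2 • (1 : Matrix (Fin n) (Fin n) ℝ)).PosDef := by
    rw [smul_one_eq_diagonal]
    exact posDef_diagonal_iff.mpr fun _ => hσ2
  have hM : M.PosDef := Matrix.PosDef.posSemidef_add hK hsmul
  have hUnit : IsUnit M := hM.isUnit
  set v : Fin n → ℝ := M⁻¹ *ᵥ k with hvdef
  have hMv : M *ᵥ v = k := by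
    rw [hvdef, mulVec_mulVec, Matrix.mul_nonsing_inv _ (isUnit_iff_isUnit_det _ |>.mp hUnit),
      one_mulVec]
  -- apply bordered PSD to the vector (-v, 1)
  have hB : (Matrix.of fun i (_ : Unit) => k i) *ᵥ (fun _ => (1:ℝ)) = k := by
    ext i; simp [mulVec, dotProduct]
  have hC : (Matrix.of fun (_ : Unit) j => k j) *ᵥ (-v) = fun _ => -(k ⬝ᵥ v) := by
    ext i; simp [mulVec, dotProduct, Finset.mul_sum]
  have hD : (Matrix.of fun (_ : Unit) (_ : Unit) => κ) *ᵥ (fun _ => (1:ℝ)) = fun _ => κ := by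
    ext i; simp [mulVec, dotProduct]
  have unit_dot : ∀ f g : Unit → ℝ, f ⬝ᵥ g = f () * g () := by
    intro f g; simp [dotProduct]
  have key : 0 ≤ v ⬝ᵥ K *ᵥ v - 2 * (k ⬝ᵥ v) + κ := by
    have hq := hbord.dotProduct_mulVec_nonneg (Sum.elim (-v) (fun _ => (1:ℝ)))
    rw [fromBlocks_mulVec] at hq
    rw [show (Sum.elim (-v) (fun _ => (1:ℝ))) ∘ Sum.inl = -v from rfl,
      show (Sum.elim (-v) (fun _ => (1:ℝ))) ∘ Sum.inr = (fun _ => (1:ℝ)) from rfl,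
      hB, hC, hD, star_trivial, sumElim_dotProduct_sumElim, unit_dot,
      neg_dotProduct, dotProduct_add, mulVec_neg, dotProduct_neg] at hq
    simp only [Pi.add_apply, one_mul, neg_add, neg_neg] at hq
    have hcomm : v ⬝ᵥ k = k ⬝ᵥ v := dotProduct_comm v k
    linarith [hq]
  -- compute v ⬝ᵥ K *ᵥ v
  have hKv : v ⬝ᵥ K *ᵥ v = k ⬝ᵥ v - σ ^ 2 * (v ⬝ᵥ v) := by
    have : K *ᵥ v = k - σ ^ 2 • v := by
      have : K = M - σ ^ 2 • (1 : Matrix (Fin n) (Fin n) ℝ) := by rw [hMdef]; abel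
      rw [this, sub_mulVec, hMv, smul_mulVec, one_mulVec]
    rw [this, dotProduct_sub, dotProduct_smul, smul_eq_mul, dotProduct_comm]
  rw [hKv] at key
  have hvv : 0 ≤ v ⬝ᵥ v := by
    have : v ⬝ᵥ v = ∑ i, v i * v i := rfl
    rw [this]; exact Finset.sum_nonneg fun i _ => mul_self_nonneg _
  by_cases hv : v = 0
  · have : k ⬝ᵥ v = 0 := by rw [hv]; simp
    rw [this]; linarith
  · have hvpos : 0 < v ⬝ᵥ v := by
      rcases lt_or_eq_of_le hvv with h | h
      · exact h
      · exact absurd (dotProduct_self_eq_zero.mp h.symm) hv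
    nlinarith [key]
end
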